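/- Let n ≥ 0 be an integer and let p and p' be two primes both strictly greater than n. Then A_0(n,p) − A_1(n,p) = A_0(n,p') − A_1(n,p'). -/

import Mathlib

open Finset

/-- `Acnt p n i` is the number of `n`-element subsets of the nonzero residues
modulo `p` whose sum is `i`. -/
def Acnt (p : ℕ) [NeZero p] (n : ℕ) (i : ZMod p) : ℕ :=
  (((Finset.univ.erase (0 : ZMod p)).powersetCard n).filter
    (fun X => X.sum id = i)).card

/-- Count over all residues (including 0). -/
def Bcnt (p : ℕ) [NeZero p] (n : ℕ) (i : ZMod p) : ℕ :=
  (((Finset.univ : Finset (ZMod p)).powersetCard n).filter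
    (fun X => X.sum id = i)).card

lemma Bcnt_shift (p : ℕ) [NeZero p] (n : ℕ) (i c : ZMod p) :
    Bcnt p n i = Bcnt p n (i + n * c) := by
  unfold Bcnt
  refine Finset.card_nbij' (fun X => X.image (· + c)) (fun Y => Y.image (· + (-c)))
    ?_ ?_ ?_ ?_
  all_goals simp only [Set.MapsTo, Set.LeftInvOn, Set.RightInvOn, Finset.mem_coe]
  · intro X hX
    simp only [Finset.mem_filter, Finset.mem_powersetCard] at hX ⊢
    obtain ⟨⟨-, hcard⟩, hsum⟩ := hX
    have hinj : Function.Injective (· + c) := add_left_injective c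
    refine ⟨⟨Finset.subset_univ _, ?_⟩, ?_⟩
    · rw [Finset.card_image_of_injective _ hinj, hcard]
    · rw [Finset.sum_image (fun x _ y _ h => hinj h)]
      simp only [id]
      have hsum' : ∑ x ∈ X, x = i := hsum
      rw [Finset.sum_add_distrib, hsum', Finset.sum_const, hcard, nsmul_eq_mul]
  · intro Y hY
    simp only [Finset.mem_filter, Finset.mem_powersetCard] at hY ⊢
    obtain ⟨⟨-, hcard⟩, hsum⟩ := hY
    have hinj : Function.Injective (· + (-c)) := add_left_injective (-c)
    refine ⟨⟨Finset.subset_univ _, ?_⟩, ?_⟩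
    · rw [Finset.card_image_of_injective _ hinj, hcard]
    · rw [Finset.sum_image (fun x _ y _ h => hinj h)]
      simp only [id]
      have hsum' : ∑ x ∈ Y, x = i + (n : ZMod p) * c := hsum
      rw [Finset.sum_add_distrib, hsum', Finset.sum_const, hcard, nsmul_eq_mul]
      ring
  · intro X _
    ext x
    simp
  · intro Y _
    ext x
    simp

lemma Bcnt_succ (p : ℕ) [NeZero p] (n : ℕ) (i : ZMod p) :
    Bcnt p (n + 1) i = Acnt p (n + 1) i + Acnt p n i := by
  classical
  unfold Bcnt Acnt
  set S := (((Finset.univ : Finset (ZMod p)).powersetCard (n + 1)).filter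
    (fun X => X.sum id = i)) with hS
  rw [← Finset.card_filter_add_card_filter_not (s := S) (p := fun X => (0 : ZMod p) ∉ X)]
  congr 1
  · congr 1
    ext X
    simp only [hS, Finset.mem_filter, Finset.mem_powersetCard, Finset.subset_erase,
      Finset.subset_univ, true_and]
    tauto
  · refine Finset.card_nbij' (fun X => X.erase 0) (fun Y => insert (0 : ZMod p) Y)
      ?_ ?_ ?_ ?_
    all_goals simp only [Set.MapsTo, Set.LeftInvOn, Set.RightInvOn, Finset.mem_coe]
    · intro X hX
      simp only [hS, Finset.mem_filter, Finset.mem_powersetCard, not_not] at hX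
      obtain ⟨⟨⟨-, hcard⟩, hsum⟩, h0⟩ := hX
      simp only [Finset.mem_filter, Finset.mem_powersetCard]
      refine ⟨⟨Finset.erase_subset_erase _ (Finset.subset_univ _), ?_⟩, ?_⟩
      · rw [Finset.card_erase_of_mem h0, hcard]; rfl
      · exact (Finset.sum_erase X rfl).trans hsum
    · intro Y hY
      simp only [Finset.mem_filter, Finset.mem_powersetCard, Finset.subset_erase] at hY
      obtain ⟨⟨⟨-, h0Y⟩, hcard⟩, hsum⟩ := hY
      simp only [hS, Finset.mem_filter, Finset.mem_powersetCard, not_not]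
      refine ⟨⟨⟨Finset.subset_univ _, ?_⟩, ?_⟩, Finset.mem_insert_self _ _⟩
      · rw [Finset.card_insert_of_notMem h0Y, hcard]
      · rw [Finset.sum_insert h0Y, hsum]; simp
    · intro X hX
      simp only [hS, Finset.mem_filter, not_not] at hX
      exact Finset.insert_erase hX.2
    · intro Y hY
      simp only [Finset.mem_filter, Finset.mem_powersetCard, Finset.subset_erase] at hY
      exact Finset.erase_insert hY.1.1.2

lemma Acnt_diff (p : ℕ) [NeZero p] (hp : p.Prime) :
    ∀ n, n < p → (Acnt p n 0 : ℤ) - Acnt p n 1 = (-1) ^ n := by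
  haveI := Fact.mk hp
  intro n
  induction n with
  | zero =>
    intro _
    have h0 : Acnt p 0 (0 : ZMod p) = 1 := by
      simp [Acnt, Finset.filter_singleton]
    have h1 : Acnt p 0 (1 : ZMod p) = 0 := by
      simp [Acnt, Finset.filter_singleton, (zero_ne_one (α := ZMod p))]
    rw [h0, h1]; simp
  | succ n ih =>
    intro h
    have hn : n < p := Nat.lt_of_succ_lt h
    have hcast : ((n + 1 : ℕ) : ZMod p) ≠ 0 := by
      rw [Ne, ZMod.natCast_eq_zero_iff]
      intro hdvd
      exact absurd (Nat.le_of_dvd (Nat.succ_pos n) hdvd) (not_le.mpr h)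
    have key : Bcnt p (n + 1) 0 = Bcnt p (n + 1) 1 := by
      have := Bcnt_shift p (n + 1) 0 (((n + 1 : ℕ) : ZMod p))⁻¹
      rwa [zero_add, Nat.cast_add, Nat.cast_one,
        mul_inv_cancel₀ (by push_cast at hcast ⊢; exact hcast)] at this
    have e0 := Bcnt_succ p n (0 : ZMod p)
    have e1 := Bcnt_succ p n (1 : ZMod p)
    have hsum : (Acnt p (n + 1) 0 : ℤ) + Acnt p n 0 = (Acnt p (n + 1) 1 : ℤ) + Acnt p n 1 := by
      exact_mod_cast (e0 ▸ e1 ▸ congrArg (Nat.cast (R := ℤ)) key)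
    have ihn := ih hn
    rw [pow_succ]
    linarith

/-- The difference `A_0(n,p) - A_1(n,p)` does not depend on the
prime `p`, provided `p > n`. -/
theorem rarefaction_stmt6 (n : ℕ) (p p' : ℕ) [NeZero p] [NeZero p']
    (hp : p.Prime) (hp' : p'.Prime) (hn : n < p) (hn' : n < p') :
    (Acnt p n 0 : ℤ) - (Acnt p n 1 : ℤ) = (Acnt p' n 0 : ℤ) - (Acnt p' n 1 : ℤ) := by
  rw [Acnt_diff p hp n hn, Acnt_diff p' hp' n hn']
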